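/- Let p and q be two distinct odd primes and let δ be a positive divisor of λ(pq) = lcm(p-1, q-1). Write g = gcd(δ, p-1). Then the sum over all units a of ℤ/pqℤ whose multiplicative order equals δ is congruent, modulo p, to μ(g) · I(gcd(δ/g, p-1)) · φ(δ)/φ(g), where I(n) equals 1 if n = 1 and 0 otherwise, μ is the Möbius function, and φ is Euler's totient function (note φ(g) divides φ(δ) since g divides δ). -/

import Mathlib

open Finset ArithmeticFunction
open scoped ArithmeticFunction.Moebius

private lemma gcd_mul_coprime {m n : ℕ} (h : Nat.Coprime m n) (k : ℕ) :
    Nat.gcd (m * n) k = Nat.gcd m k * Nat.gcd n k := by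
  have h2 := (Nat.gcd_mul_gcd_eq_iff_dvd_mul_of_coprime h (x := Nat.gcd (m * n) k)).mpr
    (Nat.gcd_dvd_left _ _)
  rw [← h2]
  congr 1
  · rw [Nat.gcd_comm _ m, ← Nat.gcd_assoc, Nat.gcd_eq_left (dvd_mul_right m n)]
  · rw [Nat.gcd_comm _ n, ← Nat.gcd_assoc, Nat.gcd_eq_left (dvd_mul_left n m)]

private noncomputable def Lside (P Q δ : ℕ) : ℤ :=
  ∑ d ∈ δ.divisors, (μ (δ / d) : ℤ) * (if Nat.gcd d P = 1 then (Nat.gcd d Q : ℤ) else 0)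

private noncomputable def Rside (P δ : ℕ) : ℤ :=
  (μ (Nat.gcd δ P) : ℤ) * (if Nat.gcd (δ / Nat.gcd δ P) P = 1 then 1 else 0) *
    ((δ.totient / (Nat.gcd δ P).totient : ℕ) : ℤ)

private def fPQ (P Q : ℕ) (hP : 1 < P) : ArithmeticFunction ℤ :=
  ⟨fun d => if Nat.gcd d P = 1 then (Nat.gcd d Q : ℤ) else 0, by
    simp only [Nat.gcd_zero_left]
    rw [if_neg (by omega)]⟩

private lemma nat_mul_eq_one {a b : ℕ} : a * b = 1 ↔ a = 1 ∧ b = 1 :=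
  ⟨fun h => ⟨Nat.eq_one_of_mul_eq_one_right h, Nat.eq_one_of_mul_eq_one_left h⟩,
   fun ⟨h1, h2⟩ => by rw [h1, h2]⟩

private lemma fPQ_mult (P Q : ℕ) (hP : 1 < P) : (fPQ P Q hP).IsMultiplicative := by
  constructor
  · simp [fPQ, Nat.gcd_one_left]
  · intro m n hmn
    simp only [fPQ, ArithmeticFunction.coe_mk]
    simp only [gcd_mul_coprime hmn P, gcd_mul_coprime hmn Q]
    by_cases h1 : Nat.gcd m P = 1 <;> by_cases h2 : Nat.gcd n P = 1 <;>
      simp [h1, h2, nat_mul_eq_one]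

private lemma Lside_eq (P Q : ℕ) (hP : 1 < P) (n : ℕ) :
    Lside P Q n = (ArithmeticFunction.moebius * fPQ P Q hP) n := by
  rw [ArithmeticFunction.mul_apply, Nat.sum_divisorsAntidiagonal'
    (f := fun a b => (μ a : ℤ) * fPQ P Q hP b)]
  rfl

private lemma Lside_mult (P Q : ℕ) (hP : 1 < P) {m n : ℕ} (h : Nat.Coprime m n) :
    Lside P Q (m * n) = Lside P Q m * Lside P Q n := by
  rw [Lside_eq P Q hP, Lside_eq P Q hP, Lside_eq P Q hP]
  exact (isMultiplicative_moebius.mul (fPQ_mult P Q hP)).map_mul_of_coprime h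
private lemma Rside_mult (P : ℕ) {a b : ℕ} (hab : Nat.Coprime a b) :
    Rside P (a * b) = Rside P a * Rside P b := by
  have hga : Nat.gcd a P ∣ a := Nat.gcd_dvd_left a P
  have hgb : Nat.gcd b P ∣ b := Nat.gcd_dvd_left b P
  have hcg : Nat.Coprime (Nat.gcd a P) (Nat.gcd b P) :=
    Nat.Coprime.coprime_dvd_left hga (Nat.Coprime.coprime_dvd_right hgb hab)
  have hg : Nat.gcd (a * b) P = Nat.gcd a P * Nat.gcd b P := gcd_mul_coprime hab P
  have hcd : Nat.Coprime (a / Nat.gcd a P) (b / Nat.gcd b P) :=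
    Nat.Coprime.coprime_dvd_left (Nat.div_dvd_of_dvd hga)
      (Nat.Coprime.coprime_dvd_right (Nat.div_dvd_of_dvd hgb) hab)
  have hdiv : a * b / (Nat.gcd a P * Nat.gcd b P) = (a / Nat.gcd a P) * (b / Nat.gcd b P) :=
    (Nat.div_mul_div_comm hga hgb).symm
  have htot : (a * b).totient / (Nat.gcd a P * Nat.gcd b P).totient
      = (a.totient / (Nat.gcd a P).totient) * (b.totient / (Nat.gcd b P).totient) := by
    rw [Nat.totient_mul hab, Nat.totient_mul hcg]
    exact (Nat.div_mul_div_comm (Nat.totient_dvd_of_dvd hga) (Nat.totient_dvd_of_dvd hgb)).symm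
  unfold Rside
  rw [hg, hdiv, htot, isMultiplicative_moebius.map_mul_of_coprime hcg]
  simp only [gcd_mul_coprime hcd P]
  by_cases h1 : Nat.gcd (a / Nat.gcd a P) P = 1 <;>
    by_cases h2 : Nat.gcd (b / Nat.gcd b P) P = 1 <;>
    simp [h1, h2, nat_mul_eq_one] <;> push_cast <;> ring

private lemma Rside_one (P : ℕ) : Rside P 1 = 1 := by
  simp [Rside, Nat.gcd_one_left]
private lemma key_prime_pow (P Q : ℕ) (hP : 1 < P) (r k : ℕ) (hr : r.Prime)
    (hk : 0 < k) (hdvd : r ^ k ∣ Nat.lcm P Q) :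
    Lside P Q (r ^ k) = Rside P (r ^ k) := by
  obtain ⟨k, rfl⟩ : ∃ k', k = k' + 1 := ⟨k - 1, (Nat.succ_pred_eq_of_pos hk).symm⟩
  have hL : Lside P Q (r ^ (k + 1)) =
      (if Nat.gcd (r ^ (k+1)) P = 1 then ((r ^ (k+1)).gcd Q : ℤ) else 0)
      - (if Nat.gcd (r ^ k) P = 1 then ((r ^ k).gcd Q : ℤ) else 0) := by
    unfold Lside
    rw [Nat.sum_divisors_prime_pow hr]
    have : k + 1 + 1 = (k + 1) + 1 := rfl
    rw [Finset.sum_range_succ, Finset.sum_range_succ]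
    have hz : ∑ i ∈ Finset.range k,
        (μ (r ^ (k+1) / r ^ i) : ℤ) *
          (if Nat.gcd (r ^ i) P = 1 then ((r ^ i).gcd Q : ℤ) else 0) = 0 := by
      apply Finset.sum_eq_zero
      intro i hi
      simp only [Finset.mem_range] at hi
      rw [Nat.pow_div (by omega) hr.pos,
        ArithmeticFunction.moebius_apply_prime_pow hr (by omega : k + 1 - i ≠ 0),
        if_neg (by omega : ¬ k + 1 - i = 1)]
      simp
    rw [hz, Nat.pow_div (by omega : k ≤ k + 1) hr.pos,
      Nat.pow_div (le_refl (k+1)) hr.pos]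
    have h1 : k + 1 - k = 1 := by omega
    have h2 : k + 1 - (k + 1) = 0 := by omega
    rw [h1, h2, pow_one, pow_zero, ArithmeticFunction.moebius_apply_prime hr,
      ArithmeticFunction.moebius_apply_one]
    push_cast
    ring
  by_cases hrP : r ∣ P
  · have hg1 : ¬ Nat.gcd (r ^ (k+1)) P = 1 := by
      intro h
      have : r ∣ Nat.gcd (r ^ (k+1)) P := Nat.dvd_gcd (dvd_pow_self r (by omega)) hrP
      rw [h] at this
      exact Nat.Prime.one_lt hr |>.ne' (Nat.eq_one_of_dvd_one this)
    rw [hL, if_neg hg1]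
    rcases Nat.eq_zero_or_pos k with rfl | hkpos
    · have e0 : (r : ℕ) ^ 0 = 1 := pow_zero r
      have e1 : (r : ℕ) ^ (0 + 1) = r := by ring
      rw [e0, if_pos (Nat.gcd_one_left P), Nat.gcd_one_left]
      unfold Rside
      rw [e1, Nat.gcd_eq_left hrP, Nat.div_self hr.pos]
      simp only [Nat.gcd_one_left, if_pos, ArithmeticFunction.moebius_apply_prime hr,
        Nat.div_self (Nat.totient_pos.mpr hr.pos)]
      simp
    · have hg2 : ¬ Nat.gcd (r ^ k) P = 1 := by
        intro h
        have : r ∣ Nat.gcd (r ^ k) P := Nat.dvd_gcd (dvd_pow_self r hkpos.ne') hrP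
        rw [h] at this
        exact Nat.Prime.one_lt hr |>.ne' (Nat.eq_one_of_dvd_one this)
      rw [if_neg hg2, sub_zero]
      by_cases hr2 : r * r ∣ P
      · have hnsq : ¬ Squarefree (Nat.gcd (r ^ (k+1)) P) := by
          intro hsq
        
          have hdd : r * r ∣ Nat.gcd (r ^ (k+1)) P := by
            refine Nat.dvd_gcd ?_ hr2
            have : r * r = r ^ 2 := by ring
            rw [this]
            exact pow_dvd_pow r (by omega)
          have := hsq r hdd
          rw [Nat.isUnit_iff] at this
          exact absurd this hr.one_lt.ne'
        unfold Rside
        rw [ArithmeticFunction.moebius_eq_zero_of_not_squarefree hnsq]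
        simp
      · have hgr : Nat.gcd (r ^ (k+1)) P = r := by
          obtain ⟨j, hj, hje⟩ := (Nat.dvd_prime_pow hr).mp (Nat.gcd_dvd_left (r ^ (k+1)) P)
          have hrg : r ∣ Nat.gcd (r ^ (k+1)) P := Nat.dvd_gcd (dvd_pow_self r (by omega)) hrP
          have hgP : Nat.gcd (r ^ (k+1)) P ∣ P := Nat.gcd_dvd_right _ _
          have hj1 : j = 1 := by
            rcases j with _ | _ | j
            · rw [hje, pow_zero] at hrg
              exact absurd (Nat.eq_one_of_dvd_one hrg) hr.one_lt.ne'
            · rfl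
            · exfalso
              apply hr2
              refine dvd_trans ?_ (hje ▸ hgP)
              have : r * r = r ^ 2 := by ring
              rw [this]
              exact pow_dvd_pow r (by omega)
          rw [hje, hj1, pow_one]
        unfold Rside
        rw [hgr]
        have hq : r ^ (k+1) / r = r ^ k := by
          rw [pow_succ, Nat.mul_div_cancel _ hr.pos]
        rw [hq, if_neg hg2]
        ring
  · have hcop : ∀ j : ℕ, Nat.gcd (r ^ j) P = 1 :=
      fun j => Nat.Coprime.pow_left j (hr.coprime_iff_not_dvd.mpr hrP)
    have hrkQ : r ^ (k+1) ∣ Q := by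
      have h1 : r ^ (k+1) ∣ P * Q := dvd_trans hdvd (Nat.lcm_dvd_mul P Q)
      exact (Nat.Coprime.dvd_of_dvd_mul_left (hcop (k+1)) h1)
    have e1 : Nat.gcd (r ^ (k+1)) Q = r ^ (k+1) := Nat.gcd_eq_left hrkQ
    have e2 : Nat.gcd (r ^ k) Q = r ^ k :=
      Nat.gcd_eq_left (dvd_trans (pow_dvd_pow r (by omega)) hrkQ)
    rw [hL, if_pos (hcop _), if_pos (hcop _), e1, e2]
    unfold Rside
    simp only [hcop (k+1), Nat.div_one, Nat.totient_one, hcop,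
      ArithmeticFunction.moebius_apply_one, if_pos]
    rw [Nat.totient_prime_pow hr (Nat.succ_pos k), Nat.succ_sub_one]
    push_cast [Nat.cast_sub hr.pos]
    ring

private lemma key_identity (P Q : ℕ) (hP : 1 < P) :
    ∀ δ : ℕ, 0 < δ → δ ∣ Nat.lcm P Q → Lside P Q δ = Rside P δ := by
  intro δ
  induction δ using Nat.recOnPosPrimePosCoprime with
  | prime_pow r n hr hn =>
    intro _ hdvd
    exact key_prime_pow P Q hP r n hr hn hdvd
  | zero => intro h; omega
  | one =>
    intro _ _
    rw [Rside_one]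
    unfold Lside
    simp [Nat.divisors_one, Nat.gcd_one_left]
  | coprime a b ha hb hab iha ihb =>
    intro hpos hdvd
    rw [Lside_mult P Q hP hab, Rside_mult P hab,
      iha (by omega) (dvd_trans (dvd_mul_right a b) hdvd),
      ihb (by omega) (dvd_trans (dvd_mul_left b a) hdvd)]
open scoped Classical in
private lemma sum_units_pow_eq_one (p : ℕ) [Fact p.Prime] (n : ℕ) :
    (∑ x ∈ Finset.univ.filter (fun x : (ZMod p)ˣ => x ^ n = 1), ((x : ZMod p))) =
      if Nat.gcd n (p - 1) = 1 then 1 else 0 := by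
  have hcard : Fintype.card (ZMod p)ˣ = p - 1 := ZMod.card_units p
  have hset : ∀ x : (ZMod p)ˣ, x ^ n = 1 ↔ x ^ Nat.gcd n (p-1) = 1 := by
    intro x
    rw [← orderOf_dvd_iff_pow_eq_one, ← orderOf_dvd_iff_pow_eq_one, Nat.dvd_gcd_iff]
    exact ⟨fun h => ⟨h, hcard ▸ orderOf_dvd_card⟩, fun h => h.1⟩
  by_cases hg : Nat.gcd n (p-1) = 1
  · rw [if_pos hg]
    have : Finset.univ.filter (fun x : (ZMod p)ˣ => x ^ n = 1) = {1} := by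
      ext x
      simp only [Finset.mem_filter, Finset.mem_univ, true_and, Finset.mem_singleton]
      rw [hset x, hg, pow_one]
    rw [this, Finset.sum_singleton, Units.val_one]
  · rw [if_neg hg]
    have hp1 : 0 < p - 1 := by
      have := (Fact.out : p.Prime).two_le; omega
    have hgdvd : Nat.gcd n (p-1) ∣ p - 1 := Nat.gcd_dvd_right _ _
    have hgpos : 0 < Nat.gcd n (p-1) := Nat.pos_of_ne_zero (by
      intro h; rw [h] at hg; exact hg (by
        have := Nat.eq_zero_of_gcd_eq_zero_right h; omega))
    obtain ⟨z, hz⟩ : ∃ z : (ZMod p)ˣ, orderOf z = Nat.gcd n (p-1) := by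
      have hcpos : 0 < (Finset.univ.filter
          (fun x : (ZMod p)ˣ => orderOf x = Nat.gcd n (p-1))).card := by
        rw [IsCyclic.card_orderOf_eq_totient (hcard ▸ hgdvd : Nat.gcd n (p-1) ∣ _)]
        exact Nat.totient_pos.mpr hgpos
      obtain ⟨z, hz⟩ := Finset.card_pos.mp hcpos
      exact ⟨z, (Finset.mem_filter.mp hz).2⟩
    have hz1 : z ≠ 1 := by
      intro h; rw [h, orderOf_one] at hz; exact hg hz.symm
    have hzn : z ^ n = 1 := (hset z).mpr (hz ▸ pow_orderOf_eq_one z)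
    set S := Finset.univ.filter (fun x : (ZMod p)ˣ => x ^ n = 1) with hS
    have hperm : ∑ x ∈ S, ((z * x : (ZMod p)ˣ) : ZMod p) = ∑ x ∈ S, ((x : ZMod p)) := by
      apply Finset.sum_nbij' (i := fun x => z * x) (j := fun x => z⁻¹ * x)
      · intro x hx
        simp only [hS, Finset.mem_filter, Finset.mem_univ, true_and] at hx ⊢
        rw [mul_pow, hzn, one_mul, hx]
      · intro x hx
        simp only [hS, Finset.mem_filter, Finset.mem_univ, true_and] at hx ⊢
        rw [mul_pow, inv_pow, hzn, inv_one, one_mul, hx]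
      · intro x _; rw [← mul_assoc, inv_mul_cancel, one_mul]
      · intro x _; rw [← mul_assoc, mul_inv_cancel, one_mul]
      · intro x _; rfl
    have hfactor : ∑ x ∈ S, ((z * x : (ZMod p)ˣ) : ZMod p)
        = (z : ZMod p) * ∑ x ∈ S, ((x : ZMod p)) := by
      rw [Finset.mul_sum]
      exact Finset.sum_congr rfl fun x _ => by rw [Units.val_mul]
    have key : ((z : ZMod p) - 1) * ∑ x ∈ S, ((x : ZMod p)) = 0 := by
      rw [sub_mul, one_mul, ← hfactor, hperm, sub_self]
    rcases mul_eq_zero.mp key with h | h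
    · exfalso
      apply hz1
      have : (z : ZMod p) = 1 := by linear_combination h
      exact Units.ext (by simpa using this)
    · exact h

open scoped Classical in
private lemma card_units_pow_eq_one (q : ℕ) [Fact q.Prime] (n : ℕ) (hn : 0 < n) :
    (Finset.univ.filter (fun y : (ZMod q)ˣ => y ^ n = 1)).card = Nat.gcd n (q - 1) := by
  have hcard : Fintype.card (ZMod q)ˣ = q - 1 := ZMod.card_units q
  have hq1 : 0 < q - 1 := by
    have := (Fact.out : q.Prime).two_le; omega
  have hgpos : 0 < Nat.gcd n (q-1) := Nat.gcd_pos_of_pos_left _ hn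
  have hgdvd : Nat.gcd n (q-1) ∣ q - 1 := Nat.gcd_dvd_right _ _
  have hset : ∀ y : (ZMod q)ˣ, y ^ n = 1 ↔ orderOf y ∣ Nat.gcd n (q-1) := by
    intro y
    rw [← orderOf_dvd_iff_pow_eq_one, Nat.dvd_gcd_iff]
    exact ⟨fun h => ⟨h, hcard ▸ orderOf_dvd_card⟩, fun h => h.1⟩
  rw [Finset.card_eq_sum_card_fiberwise
    (f := fun y : (ZMod q)ˣ => orderOf y) (t := (Nat.gcd n (q-1)).divisors) ?maps]
  case maps =>
    intro y hy
    simp only [Finset.mem_coe, Finset.mem_filter, Finset.mem_univ, true_and] at hy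
    exact Nat.mem_divisors.mpr ⟨(hset y).mp hy, hgpos.ne'⟩
  have : ∀ e ∈ (Nat.gcd n (q-1)).divisors,
      ((Finset.univ.filter (fun y : (ZMod q)ˣ => y ^ n = 1)).filter
        (fun y => orderOf y = e)).card = e.totient := by
    intro e he
    obtain ⟨hedvd, -⟩ := Nat.mem_divisors.mp he
    rw [show (Finset.univ.filter (fun y : (ZMod q)ˣ => y ^ n = 1)).filter
        (fun y => orderOf y = e) = Finset.univ.filter (fun y : (ZMod q)ˣ => orderOf y = e) from ?_]
    · exact IsCyclic.card_orderOf_eq_totient (hcard ▸ hedvd.trans hgdvd)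
    · ext y
      simp only [Finset.mem_filter, Finset.mem_univ, true_and]
      constructor
      · exact fun h => h.2
      · intro h
        exact ⟨(hset y).mpr (h ▸ hedvd), h⟩
  rw [Finset.sum_congr rfl this, Nat.sum_totient]
open Finset in
open scoped Classical in
/-- For distinct odd primes `p, q` and `δ` a positive divisor of `λ(pq) = lcm(p-1, q-1)`,
with `g = gcd(δ, p-1)`, the sum of all units of `ℤ/pqℤ` of multiplicative order `δ` is
congruent mod `p` to `μ(g) · I(gcd(δ/g, p-1)) · φ(δ)/φ(g)`, where `I(1) = 1` and `I(n) = 0`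
for `n > 1`. -/
theorem sum_units_orderOf_mod_pq (p q δ : ℕ) (hp : p.Prime) (hq : q.Prime)
    (hpodd : p ≠ 2) (hqodd : q ≠ 2) (hpq : p ≠ q) (hδpos : 0 < δ)
    (hδ : δ ∣ Nat.lcm (p - 1) (q - 1)) :
    haveI : NeZero (p * q) := ⟨mul_ne_zero hp.pos.ne' hq.pos.ne'⟩
    ZMod.castHom (dvd_mul_right p q) (ZMod p)
        (∑ a ∈ univ.filter (fun a : (ZMod (p * q))ˣ => orderOf a = δ), (a : ZMod (p * q))) =
      ((ArithmeticFunction.moebius (Nat.gcd δ (p - 1)) : ℤ) : ZMod p) *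
        (if Nat.gcd (δ / Nat.gcd δ (p - 1)) (p - 1) = 1 then 1 else 0) *
        ((Nat.totient δ / Nat.totient (Nat.gcd δ (p - 1)) : ℕ) : ZMod p) := by
  haveI : Fact p.Prime := ⟨hp⟩
  haveI : Fact q.Prime := ⟨hq⟩
  haveI : NeZero (p * q) := ⟨mul_ne_zero hp.pos.ne' hq.pos.ne'⟩
  have hP1 : 1 < p - 1 := by have := hp.two_le; omega
  have hcop : Nat.Coprime p q := (Nat.coprime_primes hp hq).mpr hpq
  set C := ZMod.chineseRemainder hcop with hC
  set E : (ZMod (p * q))ˣ ≃* (ZMod p)ˣ × (ZMod q)ˣ :=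
    (Units.mapEquiv C.toMulEquiv).trans MulEquiv.prodUnits with hE
  have hfst : ∀ x : ZMod (p * q), (C x).1 = ZMod.castHom (dvd_mul_right p q) (ZMod p) x :=
    fun x => RingHom.congr_fun (RingHom.ext_zmod
      ((RingHom.fst (ZMod p) (ZMod q)).comp C.toRingHom)
      (ZMod.castHom (dvd_mul_right p q) (ZMod p))) x
  have hval : ∀ u : (ZMod (p * q))ˣ,
      (((E u).1 : (ZMod p)ˣ) : ZMod p)
        = ZMod.castHom (dvd_mul_right p q) (ZMod p) (u : ZMod (p * q)) := by
    intro u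
    rw [← hfst]
    rfl
  set G : ℕ → ZMod p := fun n =>
    ∑ u ∈ univ.filter (fun u : (ZMod (p * q))ˣ => u ^ n = 1),
      ZMod.castHom (dvd_mul_right p q) (ZMod p) (u : ZMod (p * q)) with hGdef
  set F : ℕ → ZMod p := fun n =>
    ∑ u ∈ univ.filter (fun u : (ZMod (p * q))ˣ => orderOf u = n),
      ZMod.castHom (dvd_mul_right p q) (ZMod p) (u : ZMod (p * q)) with hFdef
  have hFG : ∀ n : ℕ, n > 0 → ∑ d ∈ n.divisors, F d = G n := by
    intro n hn
    have h1 : ∀ u : (ZMod (p * q))ˣ, u ∈ univ.filter (fun u : (ZMod (p * q))ˣ => u ^ n = 1) →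
        orderOf u ∈ n.divisors := by
      intro u hu
      simp only [mem_filter, mem_univ, true_and] at hu
      exact Nat.mem_divisors.mpr ⟨orderOf_dvd_of_pow_eq_one hu, hn.ne'⟩
    simp only [hGdef]
    rw [← Finset.sum_fiberwise_of_maps_to h1
      (fun u : (ZMod (p * q))ˣ => ZMod.castHom (dvd_mul_right p q) (ZMod p) (u : ZMod (p * q)))]
    apply Finset.sum_congr rfl
    intro d hd
    obtain ⟨hddvd, -⟩ := Nat.mem_divisors.mp hd
    have hflt : (univ.filter (fun u : (ZMod (p * q))ˣ => u ^ n = 1)).filter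
        (fun u => orderOf u = d) = univ.filter (fun u : (ZMod (p * q))ˣ => orderOf u = d) := by
      ext u
      simp only [mem_filter, mem_univ, true_and]
      constructor
      · exact fun h => h.2
      · intro h
        refine ⟨orderOf_dvd_iff_pow_eq_one.mp ?_, h⟩
        rw [h]; exact hddvd
    rw [hflt]
  have hG : ∀ n : ℕ, 0 < n → G n =
      (if Nat.gcd n (p - 1) = 1 then (1 : ZMod p) else 0) * ((Nat.gcd n (q - 1) : ℕ) : ZMod p) := by
    intro n hn
    have step1 : G n = ∑ w ∈ univ.filter (fun w : (ZMod p)ˣ × (ZMod q)ˣ => w ^ n = 1),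
        ((w.1 : ZMod p)) := by
      rw [hGdef]
      apply Finset.sum_nbij' (i := fun u => E u) (j := fun w => E.symm w)
      · intro u hu
        simp only [mem_filter, mem_univ, true_and] at hu ⊢
        rw [← map_pow, hu, map_one]
      · intro w hw
        simp only [mem_filter, mem_univ, true_and] at hw ⊢
        rw [← map_pow, hw, map_one]
      · intro u _; exact E.symm_apply_apply u
      · intro w _; exact E.apply_symm_apply w
      · intro u _; exact (hval u).symm
    have step2 : univ.filter (fun w : (ZMod p)ˣ × (ZMod q)ˣ => w ^ n = 1)
        = (univ.filter fun x : (ZMod p)ˣ => x ^ n = 1) ×ˢ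
          (univ.filter fun y : (ZMod q)ˣ => y ^ n = 1) := by
      ext w
      simp only [mem_filter, mem_univ, true_and, Finset.mem_product]
      rw [Prod.ext_iff]
      simp
    rw [step1, step2, Finset.sum_product]
    simp only [Finset.sum_const, card_units_pow_eq_one q n hn, nsmul_eq_mul]
    rw [← Finset.mul_sum, sum_units_pow_eq_one p n, mul_comm]
  have hFμ := (ArithmeticFunction.sum_eq_iff_sum_smul_moebius_eq.mp hFG) δ hδpos
  rw [Nat.sum_divisorsAntidiagonal'
    (f := fun a b => (ArithmeticFunction.moebius a : ℤ) • G b)] at hFμ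
  have hFL : F δ = ((Lside (p - 1) (q - 1) δ : ℤ) : ZMod p) := by
    rw [← hFμ]
    unfold Lside
    push_cast
    apply Finset.sum_congr rfl
    intro d hd
    have hdpos : 0 < d := Nat.pos_of_mem_divisors hd
    rw [hG d hdpos, zsmul_eq_mul]
    by_cases h : Nat.gcd d (p - 1) = 1 <;> simp [h]
  have goal1 : ZMod.castHom (dvd_mul_right p q) (ZMod p)
      (∑ a ∈ univ.filter (fun a : (ZMod (p * q))ˣ => orderOf a = δ), (a : ZMod (p * q))) = F δ := by
    rw [hFdef, map_sum]
  rw [goal1, hFL, key_identity (p - 1) (q - 1) hP1 δ hδpos hδ]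
  unfold Rside
  rw [Int.cast_mul, Int.cast_mul, Int.cast_natCast,
    apply_ite (fun z : ℤ => (z : ZMod p))]
  simp only [Int.cast_one, Int.cast_zero]
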